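/- arXiv:1406.3130 — 5 statements merged into one kernel-verified Lean document; each statement's English description precedes it below -/
import Mathlib

section
/- Let q > 0 and let θ₁, …, θ_{n+2} be pairwise distinct real numbers, none equal to any −αⱼ, such that ψ(θᵢ) = q for every i. Then ψ′(θᵢ) ≠ 0 for every i, and for every real λ ∉ {θ₁, …, θ_{n+2}} ∪ {−α₁, …, −αₙ} one has ψ(λ) ≠ q and the partial fraction decomposition 1/(ψ(λ) − q) = ∑_{i=1}^{n+2} 1/(ψ′(θᵢ) (λ − θᵢ)). (This is Equation (4.2) of the paper, using that P(θᵢ)/Q′(θᵢ) = 1/ψ′(θᵢ) where P(λ) = ∏(λ+αᵢ) and Q = (ψ−q)P.) -/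
open Polynomial Finset

/-- Lagrange interpolation identity. -/
lemma lagrange_aux {m : ℕ} (θ : Fin m → ℝ) (hθ : Function.Injective θ)
    (P : ℝ[X]) (hdeg : P.natDegree < m) (x : ℝ) :
    P.eval x = ∑ i, (P.eval (θ i) / ∏ k ∈ univ.erase i, (θ i - θ k))
      * ∏ k ∈ univ.erase i, (x - θ k) := by
  classical
  have hm : 1 ≤ m := lt_of_le_of_lt (Nat.zero_le _) hdeg
  have hD : ∀ i : Fin m, (∏ k ∈ univ.erase i, (θ i - θ k)) ≠ 0 := by
    intro i
    refine Finset.prod_ne_zero_iff.mpr fun k hk => sub_ne_zero.mpr fun h => ?_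
    exact (Finset.mem_erase.mp hk).1.symm (hθ h)
  set L : ℝ[X] := ∑ i, C (P.eval (θ i) / ∏ k ∈ univ.erase i, (θ i - θ k))
      * ∏ k ∈ univ.erase i, (X - C (θ k)) with hLdef
  have hLev : ∀ y : ℝ, L.eval y = ∑ i, (P.eval (θ i) / ∏ k ∈ univ.erase i, (θ i - θ k))
      * ∏ k ∈ univ.erase i, (y - θ k) := by
    intro y
    simp [hLdef, eval_finset_sum, eval_prod]
  have hT : P - L = 0 := by
    apply Polynomial.eq_zero_of_natDegree_lt_card_of_eval_eq_zero _ hθ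
    · intro j
      rw [eval_sub, hLev]
      rw [Finset.sum_eq_single j]
      · rw [div_mul_cancel₀ _ (hD j), sub_self]
      · intro i _ hij
        apply mul_eq_zero_of_right
        refine Finset.prod_eq_zero (Finset.mem_erase.mpr ⟨fun h => hij h.symm, mem_univ j⟩) ?_
        exact sub_self _
      · intro h; exact absurd (mem_univ j) h
    · rw [Fintype.card_fin]
      have hL : L.natDegree ≤ m - 1 := by
        apply Polynomial.natDegree_sum_le_of_forall_le
        intro i _
        refine le_trans (natDegree_mul_le) ?_
        rw [natDegree_C, zero_add]
        refine le_trans (natDegree_prod_le _ _) ?_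
        have : ∀ k ∈ univ.erase i, (X - C (θ k)).natDegree = 1 := fun k _ => natDegree_X_sub_C _
        rw [Finset.sum_congr rfl this, Finset.sum_const, smul_eq_mul, mul_one,
          Finset.card_erase_of_mem (mem_univ i), Finset.card_univ, Fintype.card_fin]
      have := natDegree_sub_le P L
      omega
  have hPL := sub_eq_zero.mp hT
  conv_lhs => rw [hPL]
  exact hLev x

/-- Equation (4.2) of the paper: the partial fraction decomposition
1/(ψ(λ) − q) = ∑ᵢ 1/(ψ′(θᵢ)(λ − θᵢ)) where θ₁, …, θ_{n+2} are the roots of ψ = q,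
all of which are simple. -/
theorem hyperexp_partial_fraction
    (n : ℕ) (hn : 1 ≤ n)
    (α w : Fin n → ℝ)
    (hα_pos : ∀ i, 0 < α i) (hα_mono : StrictMono α)
    (hw_pos : ∀ i, 0 < w i) (hw_sum : ∑ i, w i = 1)
    (η : ℝ) (hη : 0 < η) (c σ : ℝ) (hσ : 0 < σ)
    (ψ : ℝ → ℝ)
    (hψ : ∀ l : ℝ, ψ l
      = c * l + σ ^ 2 / 2 * l ^ 2 + η * ((∑ i, w i * α i / (l + α i)) - 1))
    (q : ℝ) (hq : 0 < q)
    (θ : Fin (n + 2) → ℝ) (hθ_inj : Function.Injective θ)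
    (hθ_pole : ∀ i j, θ i ≠ -α j)
    (hθ_root : ∀ i, ψ (θ i) = q) :
    (∀ i, deriv ψ (θ i) ≠ 0) ∧
    ∀ l : ℝ, (∀ i, l ≠ θ i) → (∀ j, l ≠ -α j) →
      ψ l ≠ q ∧ 1 / (ψ l - q) = ∑ i, 1 / (deriv ψ (θ i) * (l - θ i)) := by
  classical
  set P : ℝ[X] := ∏ j, (X + C (α j)) with hPdef
  have hPeval : ∀ l : ℝ, P.eval l = ∏ j, (l + α j) := by
    intro l; simp [hPdef, eval_prod]
  have hPne : ∀ l : ℝ, (∀ j, l ≠ -α j) → P.eval l ≠ 0 := by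
    intro l hl
    rw [hPeval]
    exact Finset.prod_ne_zero_iff.mpr fun j _ h => hl j (by linarith)
  have hPmono : P.Monic := monic_prod_of_monic _ _ fun j _ => monic_X_add_C _
  have hPdeg : P.natDegree = n := by
    rw [hPdef, natDegree_prod_of_monic _ _ fun j _ => monic_X_add_C _]
    simp
  have hσ2 : σ ^ 2 / 2 ≠ 0 := by positivity
  set A : ℝ[X] := C (σ ^ 2 / 2) * X ^ 2 + C c * X - C (η + q) with hAdef
  set S : ℝ[X] := ∑ i, C (η * (w i * α i)) * ∏ j ∈ univ.erase i, (X + C (α j)) with hSdef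
  set Q : ℝ[X] := A * P + S with hQdef
  have hQeval : ∀ l : ℝ, (∀ j, l ≠ -α j) → Q.eval l = (ψ l - q) * P.eval l := by
    intro l hl
    have hne : ∀ j, l + α j ≠ 0 := fun j h => hl j (by linarith)
    have e1 : (ψ l - q) * P.eval l
        = (σ ^ 2 / 2 * l ^ 2 + c * l - (η + q)) * P.eval l
          + η * ∑ i, (w i * α i / (l + α i) * P.eval l) := by
      rw [hψ l, ← Finset.sum_mul]; ring
    have e2 : ∀ i : Fin n, w i * α i / (l + α i) * P.eval l
        = w i * α i * ∏ j ∈ univ.erase i, (l + α j) := by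
      intro i
      rw [hPeval, ← Finset.mul_prod_erase univ _ (mem_univ i), ← mul_assoc,
        div_mul_cancel₀ _ (hne i)]
    rw [e1, Finset.sum_congr rfl fun i _ => e2 i]
    have e3 : Q.eval l = (σ ^ 2 / 2 * l ^ 2 + c * l - (η + q)) * P.eval l
        + ∑ i, η * (w i * α i) * ∏ j ∈ univ.erase i, (l + α j) := by
      simp only [hQdef, hAdef, hSdef, eval_add, eval_sub, eval_mul, eval_pow, eval_C, eval_X,
        eval_finset_sum, eval_prod]
    rw [e3, Finset.mul_sum]
    congr 1
    exact Finset.sum_congr rfl fun i _ => by ring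
  -- R and the identity Q = R
  have hθD : ∀ i : Fin (n + 2), (∏ k ∈ univ.erase i, (θ i - θ k)) ≠ 0 := by
    intro i
    refine Finset.prod_ne_zero_iff.mpr fun k hk => sub_ne_zero.mpr fun h => ?_
    exact (Finset.mem_erase.mp hk).1.symm (hθ_inj h)
  set R : ℝ[X] := C (σ ^ 2 / 2) * ∏ i, (X - C (θ i)) with hRdef
  have hmon : (∏ i : Fin (n + 2), (X - C (θ i))).Monic :=
    monic_prod_of_monic _ _ fun i _ => monic_X_sub_C _
  have hRdeg : R.natDegree = n + 2 := by
    rw [hRdef, natDegree_C_mul hσ2, natDegree_prod_of_monic _ _ fun i _ => monic_X_sub_C _]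
    simp
  have hRlc : R.leadingCoeff = σ ^ 2 / 2 := by
    rw [hRdef, leadingCoeff_mul, leadingCoeff_C, hmon.leadingCoeff, mul_one]
  have hRne : R ≠ 0 := fun h => hσ2 (by rw [← hRlc, h, leadingCoeff_zero])
  have hAdeg : A.natDegree = 2 := by
    rw [hAdef]; compute_degree!
    exact hσ.ne'
  have hAlc : A.leadingCoeff = σ ^ 2 / 2 := by
    rw [Polynomial.leadingCoeff, hAdeg, hAdef]
    simp [coeff_C]
  have hAne : A ≠ 0 := fun h => hσ2 (by rw [← hAlc, h, leadingCoeff_zero])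
  have hAPdeg : (A * P).natDegree = n + 2 := by
    rw [natDegree_mul hAne hPmono.ne_zero, hAdeg, hPdeg]; omega
  have hAPlc : (A * P).leadingCoeff = σ ^ 2 / 2 := by
    rw [leadingCoeff_mul, hAlc, hPmono.leadingCoeff, mul_one]
  have hAPne : A * P ≠ 0 := mul_ne_zero hAne hPmono.ne_zero
  have hsub : (A * P - R).natDegree < n + 2 := by
    have hd : (A * P).degree = R.degree := by
      rw [degree_eq_natDegree hAPne, degree_eq_natDegree hRne, hAPdeg, hRdeg]
    have := Polynomial.degree_sub_lt hd hAPne (by rw [hAPlc, hRlc])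
    rcases eq_or_ne (A * P - R) 0 with h | h
    · rw [h]; simp
    · rw [degree_eq_natDegree hAPne, hAPdeg] at this
      exact_mod_cast (Polynomial.natDegree_lt_iff_degree_lt h).mpr this
  have hSdeg : S.natDegree ≤ n + 1 := by
    apply Polynomial.natDegree_sum_le_of_forall_le
    intro i _
    refine le_trans natDegree_mul_le ?_
    rw [natDegree_C, zero_add]
    refine le_trans (natDegree_prod_le _ _) ?_
    have : ∀ k ∈ univ.erase i, (X + C (α k)).natDegree = 1 := fun k _ => natDegree_X_add_C _
    rw [Finset.sum_congr rfl this, Finset.sum_const, smul_eq_mul, mul_one,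
      Finset.card_erase_of_mem (mem_univ i), Finset.card_univ, Fintype.card_fin]
    omega
  have hQR : Q = R := by
    have h0 : Q - R = 0 := by
      apply Polynomial.eq_zero_of_natDegree_lt_card_of_eval_eq_zero _ hθ_inj
      · intro i
        rw [eval_sub, hQeval (θ i) (hθ_pole i), hθ_root i, sub_self, zero_mul, hRdef]
        rw [eval_mul, eval_prod]
        rw [Finset.prod_eq_zero (mem_univ i) (by simp)]
        ring
      · rw [Fintype.card_fin]
        have e : Q - R = (A * P - R) + S := by rw [hQdef]; ring
        rw [e]
        have := natDegree_add_le (A * P - R) S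
        omega
    exact sub_eq_zero.mp h0
  have hQeval' : ∀ l : ℝ, Q.eval l = σ ^ 2 / 2 * ∏ k, (l - θ k) := by
    intro l
    rw [hQR, hRdef]
    simp [eval_prod]
  -- derivative of ψ at the roots
  have hUopen : IsOpen {l : ℝ | ∀ j, l ≠ -α j} := by
    have : {l : ℝ | ∀ j, l ≠ -α j} = ⋂ j, {-α j}ᶜ := by
      ext l; simp [Set.mem_iInter]
    rw [this]
    exact isOpen_iInter_of_finite fun j => isOpen_compl_singleton
  have hψdiff : ∀ x : ℝ, (∀ j, x ≠ -α j) → DifferentiableAt ℝ ψ x := by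
    intro x hx
    have hfun : ψ = fun l : ℝ =>
        c * l + σ ^ 2 / 2 * l ^ 2 + η * ((∑ i, w i * α i / (l + α i)) - 1) := funext hψ
    rw [hfun]
    refine DifferentiableAt.add (by fun_prop) ?_
    refine DifferentiableAt.const_mul ?_ η
    refine DifferentiableAt.sub_const ?_ 1
    refine DifferentiableAt.fun_sum fun j _ => ?_
    refine DifferentiableAt.div (by fun_prop) (by fun_prop) ?_
    exact fun h => hx j (by linarith)
  set D : Fin (n + 2) → ℝ := fun i => ∏ k ∈ univ.erase i, (θ i - θ k) with hDdef
  have hderiv_eq : ∀ i, deriv ψ (θ i) * P.eval (θ i) = σ ^ 2 / 2 * D i := by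
    intro i
    have hprodD : HasDerivAt (fun x : ℝ => σ ^ 2 / 2 * ∏ k, (x - θ k))
        (σ ^ 2 / 2 * D i) (θ i) := by
      have h1 := HasDerivAt.fun_finsetProd (u := (univ : Finset (Fin (n + 2))))
        (f := fun k (x : ℝ) => x - θ k) (f' := fun _ => (1 : ℝ)) (x := θ i)
        (fun k _ => (hasDerivAt_id (θ i)).sub_const (θ k))
      have h2 : (∑ k, (∏ j ∈ univ.erase k, (θ i - θ j)) • (1 : ℝ)) = D i := by
        rw [Finset.sum_eq_single i]
        · simp [hDdef]
        · intro k _ hk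
          rw [smul_eq_mul, mul_one]
          exact Finset.prod_eq_zero (Finset.mem_erase.mpr ⟨fun h => hk h.symm, mem_univ i⟩)
            (sub_self _)
        · intro h; exact absurd (mem_univ i) h
      rw [h2] at h1
      exact h1.const_mul _
    have hev : (fun l : ℝ => (ψ l - q) * P.eval l)
        =ᶠ[nhds (θ i)] (fun l : ℝ => σ ^ 2 / 2 * ∏ k, (l - θ k)) := by
      refine Filter.eventuallyEq_of_mem (hUopen.mem_nhds (hθ_pole i)) fun l hl => ?_
      rw [← hQeval l hl, hQeval' l]
    have hgd : deriv (fun l : ℝ => (ψ l - q) * P.eval l) (θ i) = σ ^ 2 / 2 * D i := by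
      rw [Filter.EventuallyEq.deriv_eq hev]
      exact hprodD.deriv
    have hmul : deriv (fun l : ℝ => (ψ l - q) * P.eval l) (θ i)
        = deriv ψ (θ i) * P.eval (θ i) := by
      rw [deriv_fun_mul ((hψdiff (θ i) (hθ_pole i)).sub_const q) (Polynomial.differentiableAt P)]
      rw [deriv_sub_const, hθ_root i, sub_self, zero_mul, add_zero]
    rw [← hmul, hgd]
  have hderiv_ne : ∀ i, deriv ψ (θ i) ≠ 0 := by
    intro i h
    have := hderiv_eq i
    rw [h, zero_mul] at this
    exact mul_ne_zero hσ2 (hθD i) this.symm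
  have hderiv_val : ∀ i, deriv ψ (θ i) = σ ^ 2 / 2 * D i / P.eval (θ i) := by
    intro i
    rw [eq_div_iff (hPne (θ i) (hθ_pole i))]
    exact hderiv_eq i
  refine ⟨hderiv_ne, ?_⟩
  intro l hlθ hlα
  have hPl := hPne l hlα
  have hprod_ne : (∏ k, (l - θ k)) ≠ 0 :=
    Finset.prod_ne_zero_iff.mpr fun k _ => sub_ne_zero.mpr (hlθ k)
  have hQl : Q.eval l ≠ 0 := by
    rw [hQeval' l]
    exact mul_ne_zero hσ2 hprod_ne
  have hneq : ψ l ≠ q := by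
    intro h
    apply hQl
    rw [hQeval l hlα, h, sub_self, zero_mul]
  refine ⟨hneq, ?_⟩
  have hlag := lagrange_aux θ hθ_inj P (by omega) l
  have hψlq : ψ l - q = Q.eval l / P.eval l := (eq_div_iff hPl).mpr (hQeval l hlα).symm
  rw [hψlq, one_div_div, hQeval' l, hlag, Finset.sum_div]
  refine Finset.sum_congr rfl fun i _ => ?_
  rw [hderiv_val i]
  have hsplit : (∏ k, (l - θ k)) = (l - θ i) * ∏ k ∈ univ.erase i, (l - θ k) :=
    (Finset.mul_prod_erase _ _ (mem_univ i)).symm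
  rw [hsplit]
  have hli : l - θ i ≠ 0 := sub_ne_zero.mpr (hlθ i)
  have hpe : (∏ k ∈ univ.erase i, (l - θ k)) ≠ 0 :=
    Finset.prod_ne_zero_iff.mpr fun k _ => sub_ne_zero.mpr (hlθ k)
  have hPθ := hPne (θ i) (hθ_pole i)
  have hDi := hθD i
  simp only [hDdef]
  field_simp
end

section
/- Let q > 0 and let θ₁, …, θ_{n+2} be pairwise distinct real numbers, none equal to any −αⱼ, such that ψ(θᵢ) = q and ψ′(θᵢ) ≠ 0 for every i. Then θᵢ ≠ 0 for every i and q ∑_{i=1}^{n+2} 1/(θᵢ ψ′(θᵢ)) = 1. (This is the identity obtained in the paper by taking λ = 0 in the partial fraction decomposition of 1/(ψ − q).) -/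
open Polynomial Finset

/-- Taking λ = 0 in the partial fraction decomposition of 1/(ψ − q) gives
q ∑ᵢ 1/(θᵢ ψ′(θᵢ)) = 1. -/
theorem hyperexp_sum_identity
    (n : ℕ) (hn : 1 ≤ n)
    (α w : Fin n → ℝ)
    (hα_pos : ∀ i, 0 < α i) (hα_mono : StrictMono α)
    (hw_pos : ∀ i, 0 < w i) (hw_sum : ∑ i, w i = 1)
    (η : ℝ) (hη : 0 < η) (c σ : ℝ) (hσ : 0 < σ)
    (ψ : ℝ → ℝ)
    (hψ : ∀ l : ℝ, ψ l
      = c * l + σ ^ 2 / 2 * l ^ 2 + η * ((∑ i, w i * α i / (l + α i)) - 1))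
    (q : ℝ) (hq : 0 < q)
    (θ : Fin (n + 2) → ℝ) (hθ_inj : Function.Injective θ)
    (hθ_pole : ∀ i j, θ i ≠ -α j)
    (hθ_root : ∀ i, ψ (θ i) = q)
    (hθ_simple : ∀ i, deriv ψ (θ i) ≠ 0) :
    (∀ i, θ i ≠ 0) ∧ q * ∑ i, 1 / (θ i * deriv ψ (θ i)) = 1 := by
  classical
  -- ψ(0) = 0
  have hψ0 : ψ 0 = 0 := by
    rw [hψ 0]
    have : ∀ i : Fin n, w i * α i / (0 + α i) = w i := by
      intro i
      rw [zero_add, mul_div_assoc, div_self (hα_pos i).ne', mul_one]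
    rw [Finset.sum_congr rfl (fun i _ => this i), hw_sum]
    ring
  have hθ0 : ∀ i, θ i ≠ 0 := by
    intro i h
    have := hθ_root i
    rw [h, hψ0] at this
    exact hq.ne' this.symm
  refine ⟨hθ0, ?_⟩
  -- polynomials
  set Q : ℝ[X] := ∏ j : Fin n, (X + C (α j)) with hQdef
  set S : ℝ[X] := ∑ i : Fin n, C (w i * α i) * ∏ j ∈ Finset.univ.erase i, (X + C (α j)) with hSdef
  set P : ℝ[X] := (C c * X + C (σ ^ 2 / 2) * X ^ 2 - C (η + q)) * Q + C η * S with hPdef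
  have hQeval : ∀ x : ℝ, Q.eval x = ∏ j, (x + α j) := by
    intro x; simp [hQdef, eval_prod]
  have hQne : ∀ x : ℝ, (∀ j, x + α j ≠ 0) → Q.eval x ≠ 0 := by
    intro x hx
    rw [hQeval]
    exact Finset.prod_ne_zero_iff.mpr fun j _ => hx j
  have hQne' : ∀ x : ℝ, Q.eval x ≠ 0 → ∀ j, x + α j ≠ 0 := by
    intro x hx j hj
    apply hx
    rw [hQeval]
    exact Finset.prod_eq_zero (mem_univ j) hj
  -- P = (ψ - q) Q away from poles
  have hSeval : ∀ x : ℝ, S.eval x = ∑ i, w i * α i * ∏ j ∈ Finset.univ.erase i, (x + α j) := by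
    intro x; simp [hSdef, eval_finset_sum, eval_prod]
  have hPQ : ∀ x : ℝ, (∀ j, x + α j ≠ 0) → P.eval x = (ψ x - q) * Q.eval x := by
    intro x hx
    have key : (∑ i, w i * α i / (x + α i)) * Q.eval x = S.eval x := by
      rw [hQeval, hSeval, Finset.sum_mul]
      refine Finset.sum_congr rfl fun i _ => ?_
      rw [← Finset.mul_prod_erase Finset.univ (fun j => x + α j) (mem_univ i),
        div_mul_eq_mul_div, mul_comm (x + α i) _, ← mul_assoc,
        mul_div_assoc, div_self (hx i), mul_one]
    have hev : P.eval x = (c * x + σ ^ 2 / 2 * x ^ 2 - (η + q)) * Q.eval x + η * S.eval x := by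
      simp [hPdef]
    rw [hev, ← key, hψ x]
    ring
  have hpole' : ∀ i j, θ i + α j ≠ 0 := by
    intro i j h
    exact hθ_pole i j (by linarith)
  have hProots : ∀ i, P.eval (θ i) = 0 := by
    intro i
    rw [hPQ (θ i) (hpole' i), hθ_root i, sub_self, zero_mul]
  -- degrees
  have hQmonic : Q.Monic := monic_prod_of_monic _ _ fun j _ => monic_X_add_C (α j)
  have hQdeg : Q.natDegree = n := by
    rw [hQdef, natDegree_prod_of_monic _ _ fun j _ => monic_X_add_C (α j)]
    simp
  set N : ℝ[X] := Lagrange.nodal Finset.univ θ with hNdef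
  have hNmonic : N.Monic := Lagrange.nodal_monic
  have hNdeg : N.natDegree = n + 2 := by
    rw [hNdef, Lagrange.natDegree_nodal, card_univ, Fintype.card_fin]
  have h1 : (X ^ 2 * Q : ℝ[X]).Monic := (monic_X_pow 2).mul hQmonic
  have h1deg : (X ^ 2 * Q : ℝ[X]).natDegree = n + 2 := by
    rw [natDegree_mul (pow_ne_zero 2 X_ne_zero) hQmonic.ne_zero, natDegree_X_pow, hQdeg]
    omega
  have hB : (X ^ 2 * Q - N).natDegree ≤ n + 1 := by
    by_cases hz : X ^ 2 * Q - N = 0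
    · simp [hz]
    · have hd : (X ^ 2 * Q - N).degree < ((n + 2 : ℕ) : WithBot ℕ) := by
        have d1 : (X ^ 2 * Q : ℝ[X]).degree = ((n + 2 : ℕ) : WithBot ℕ) := by
          rw [degree_eq_natDegree h1.ne_zero, h1deg]
        have d2 : N.degree = ((n + 2 : ℕ) : WithBot ℕ) := by
          rw [degree_eq_natDegree hNmonic.ne_zero, hNdeg]
        have := degree_sub_lt (d1.trans d2.symm) h1.ne_zero
          (by rw [h1.leadingCoeff, hNmonic.leadingCoeff])
        rwa [d1] at this
      have := (natDegree_lt_iff_degree_lt hz).mpr hd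
      omega
  have hA : ((C c * X - C (η + q)) * Q).natDegree ≤ n + 1 := by
    calc ((C c * X - C (η + q)) * Q).natDegree
        ≤ (C c * X - C (η + q)).natDegree + Q.natDegree := natDegree_mul_le
      _ ≤ 1 + n := by
          refine add_le_add ((natDegree_sub_le _ _).trans (max_le ?_ ?_)) hQdeg.le
          · exact (natDegree_C_mul_le _ _).trans (by simp)
          · simp
      _ = n + 1 := by omega
  have hSdeg : S.natDegree ≤ n + 1 := by
    rw [hSdef]
    refine natDegree_sum_le_of_forall_le _ _ fun i _ => ?_
    calc (C (w i * α i) * ∏ j ∈ Finset.univ.erase i, (X + C (α j))).natDegree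
        ≤ (∏ j ∈ Finset.univ.erase i, (X + C (α j))).natDegree := natDegree_C_mul_le _ _
      _ = (Finset.univ.erase i).card := by
          rw [natDegree_prod_of_monic _ _ fun j _ => monic_X_add_C (α j)]
          simp
      _ ≤ n + 1 := by
          have := Finset.card_erase_le (a := i) (s := (Finset.univ : Finset (Fin n)))
          simp only [card_univ, Fintype.card_fin] at this
          omega
  have hPN : P = C (σ ^ 2 / 2) * N := by
    rw [← sub_eq_zero]
    apply Polynomial.eq_zero_of_natDegree_lt_card_of_eval_eq_zero _ hθ_inj
    · intro i
      rw [eval_sub, eval_mul, eval_C, hProots i, hNdef,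
        Lagrange.eval_nodal_at_node (Finset.mem_univ i)]
      ring
    · have hsplit : P - C (σ ^ 2 / 2) * N
          = (C c * X - C (η + q)) * Q + C η * S + C (σ ^ 2 / 2) * (X ^ 2 * Q - N) := by
        rw [hPdef]; ring
      rw [hsplit, Fintype.card_fin]
      have hb1 : (C η * S).natDegree ≤ n + 1 := (natDegree_C_mul_le _ _).trans hSdeg
      have hb2 : (C (σ ^ 2 / 2) * (X ^ 2 * Q - N)).natDegree ≤ n + 1 :=
        (natDegree_C_mul_le _ _).trans hB
      have := natDegree_add_le ((C c * X - C (η + q)) * Q + C η * S)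
        (C (σ ^ 2 / 2) * (X ^ 2 * Q - N))
      have := natDegree_add_le ((C c * X - C (η + q)) * Q) (C η * S)
      omega
  -- derivative of P at the roots
  set D : Fin (n + 2) → ℝ := fun i => ∏ k ∈ Finset.univ.erase i, (θ i - θ k) with hDdef
  have hDne : ∀ i, D i ≠ 0 := by
    intro i
    refine Finset.prod_ne_zero_iff.mpr fun k hk => sub_ne_zero.mpr ?_
    exact fun h => (Finset.mem_erase.mp hk).1 (hθ_inj h.symm)
  have hP'eval : ∀ i, (derivative P).eval (θ i) = σ ^ 2 / 2 * D i := by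
    intro i
    rw [hPN, derivative_C_mul, eval_mul, eval_C, hNdef,
      Lagrange.eval_nodal_derivative_eval_node_eq (Finset.mem_univ i), Lagrange.eval_nodal]
  have hQθ : ∀ i, Q.eval (θ i) ≠ 0 := fun i => hQne _ (hpole' i)
  have hderiv : ∀ i, deriv ψ (θ i) = σ ^ 2 / 2 * D i / Q.eval (θ i) := by
    intro i
    have hcont : Continuous fun x : ℝ => Q.eval x := Q.continuous
    have hopen : IsOpen {x : ℝ | Q.eval x ≠ 0} :=
      IsOpen.preimage hcont isOpen_compl_singleton
    have hmem : {x : ℝ | Q.eval x ≠ 0} ∈ nhds (θ i) := hopen.mem_nhds (hQθ i)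
    have hev : ψ =ᶠ[nhds (θ i)] fun x => P.eval x / Q.eval x + q := by
      filter_upwards [hmem] with x hx
      rw [hPQ x (hQne' x hx), mul_div_assoc, div_self hx, mul_one]
      ring
    have hd : HasDerivAt (fun x => P.eval x / Q.eval x + q)
        (((derivative P).eval (θ i) * Q.eval (θ i)
          - P.eval (θ i) * (derivative Q).eval (θ i)) / Q.eval (θ i) ^ 2) (θ i) :=
      ((P.hasDerivAt (θ i)).div (Q.hasDerivAt (θ i)) (hQθ i)).add_const q
    rw [hev.deriv_eq, hd.deriv, hProots i, hP'eval i, zero_mul, sub_zero, pow_two (Q.eval (θ i)),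
      ← div_div, mul_div_cancel_right₀ _ (hQθ i)]
  -- value at 0
  have hα0 : ∀ j : Fin n, (0 : ℝ) + α j ≠ 0 := fun j => by
    simpa using (hα_pos j).ne'
  have hQ0 : Q.eval 0 ≠ 0 := hQne 0 hα0
  set T : ℝ := ∏ k : Fin (n + 2), (0 - θ k) with hTdef
  have hTne : T ≠ 0 :=
    Finset.prod_ne_zero_iff.mpr fun k _ => sub_ne_zero.mpr (Ne.symm (hθ0 k))
  have hP0 : P.eval 0 = -q * Q.eval 0 := by
    rw [hPQ 0 hα0, hψ0]; ring
  have hT : σ ^ 2 / 2 * T = -q * Q.eval 0 := by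
    have h0 : P.eval 0 = σ ^ 2 / 2 * T := by
      rw [hPN, eval_mul, eval_C, hNdef, Lagrange.eval_nodal, hTdef]
    rw [← h0]; exact hP0
  -- Lagrange interpolation of Q at the nodes θ, evaluated at 0
  have hlag : Q.eval 0 = ∑ i, Q.eval (θ i) * ((D i)⁻¹ * (T * (0 - θ i)⁻¹)) := by
    have hdeg : Q.degree < ((Finset.univ : Finset (Fin (n + 2))).card : WithBot ℕ) := by
      rw [degree_eq_natDegree hQmonic.ne_zero, hQdeg, card_univ, Fintype.card_fin]
      exact_mod_cast (by omega : n < n + 2)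
    have h := Lagrange.eq_interpolate (s := Finset.univ) (v := θ) hθ_inj.injOn hdeg
    have h0 := congrArg (eval 0) h
    rw [Lagrange.interpolate_apply, eval_finset_sum] at h0
    rw [h0]
    refine Finset.sum_congr rfl fun i _ => ?_
    rw [eval_mul, eval_C]
    congr 1
    rw [Lagrange.basis, eval_prod]
    have hbd : ∀ k ∈ Finset.univ.erase i,
        eval 0 (Lagrange.basisDivisor (θ i) (θ k)) = (θ i - θ k)⁻¹ * (0 - θ k) := by
      intro k _; simp [Lagrange.basisDivisor]
    rw [Finset.prod_congr rfl hbd, Finset.prod_mul_distrib]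
    congr 1
    · show ∏ k ∈ Finset.univ.erase i, (θ i - θ k)⁻¹
          = (∏ k ∈ Finset.univ.erase i, (θ i - θ k))⁻¹
      rw [Finset.prod_inv_distrib]
    · have hme := Finset.mul_prod_erase Finset.univ (fun k => (0 : ℝ) - θ k)
        (Finset.mem_univ i)
      have h0i : (0 : ℝ) - θ i ≠ 0 := sub_ne_zero.mpr (Ne.symm (hθ0 i))
      rw [hTdef, ← hme, mul_comm (0 - θ i), mul_inv_cancel_right₀ h0i]
  -- finish
  have hsum : ∀ i, 1 / (θ i * deriv ψ (θ i))
      = (-2 / (σ ^ 2 * T)) * (Q.eval (θ i) * ((D i)⁻¹ * (T * (0 - θ i)⁻¹))) := by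
    intro i
    rw [hderiv i]
    field_simp [hθ0 i, hDne i, hQθ i, hTne, sub_ne_zero.mpr (Ne.symm (hθ0 i))]
    ring
  rw [Finset.sum_congr rfl fun i _ => hsum i, ← Finset.mul_sum, ← hlag]
  have h2 : σ ^ 2 * T = -2 * q * Q.eval 0 := by
    ring_nf at hT ⊢
    linarith
  rw [h2]
  field_simp
end

section
/- Let q > 0 and let θ₁ > θ₂ > ⋯ > θ_{n+2} be pairwise distinct real numbers, none equal to any −αⱼ, such that ψ(θᵢ) = q and ψ′(θᵢ) ≠ 0 for every i. Define W(x) = ∑_{i=1}^{n+2} e^{θᵢ x}/ψ′(θᵢ) for x ≥ 0. Then for every λ > θ₁ the integral ∫₀^∞ e^{−λx} W(x) dx converges, ψ(λ) ≠ q, and ∫₀^∞ e^{−λx} W(x) dx = 1/(ψ(λ) − q); that is, W is the q-scale function W^{(q)} of the hyper-exponential jump-diffusion (Equation (4.3) of the paper). -/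
open MeasureTheory Set Real Filter Polynomial Finset

lemma helper_integral_exp {b : ℝ} (hb : 0 < b) :
    ∫ x in Set.Ioi (0:ℝ), Real.exp (-b * x) = 1 / b := by
  have hderiv : ∀ x ∈ Set.Ici (0:ℝ),
      HasDerivAt (fun x => -Real.exp (-b * x) / b) (Real.exp (-b * x)) x := by
    intro x _
    have h1 : HasDerivAt (fun x : ℝ => -b * x) (-b) x := by
      simpa using (hasDerivAt_id x).const_mul (-b)
    have h2 := (h1.exp.neg).div_const b
    exact h2.congr_deriv (by rw [div_eq_iff hb.ne']; ring)
  have hint : IntegrableOn (fun x => Real.exp (-b * x)) (Set.Ioi (0:ℝ)) :=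
    exp_neg_integrableOn_Ioi 0 hb
  have htend : Tendsto (fun x => -Real.exp (-b * x) / b) atTop (nhds (-0 / b)) := by
    refine Tendsto.div_const (Tendsto.neg ?_) _
    exact Real.tendsto_exp_atBot.comp (tendsto_id.const_mul_atTop_of_neg (by linarith))
  have h := integral_Ioi_of_hasDerivAt_of_tendsto' hderiv hint (by simpa using htend)
  rw [h]
  simp [Real.exp_zero]
  field_simp

lemma helper_term_identity (a A B Q s D : ℝ) (ha : a ≠ 0) (hA : A ≠ 0) (hB : B ≠ 0)
    (hQ : Q ≠ 0) (hs : s ≠ 0) (hD : D = s * A / Q) :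
    1 / (a * D) = Q * (A⁻¹ * B) / (s * (a * B)) := by
  subst hD
  rw [div_eq_div_iff (by simp [ha, hA, hs, hQ, div_ne_zero]) (by simp [ha, hB, hs])]
  field_simp

set_option maxHeartbeats 1000000 in
/-- Equation (4.3) of the paper: W^{(q)}(x) = ∑ᵢ e^{θᵢx}/ψ′(θᵢ) is the q-scale
function of the hyper-exponential jump-diffusion, i.e. its Laplace transform on
[0, ∞) is 1/(ψ(λ) − q) for λ > θ₁ = Φ(q). -/
theorem hyperexp_scale_function
    (n : ℕ) (hn : 1 ≤ n)
    (α w : Fin n → ℝ)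
    (hα_pos : ∀ i, 0 < α i) (hα_mono : StrictMono α)
    (hw_pos : ∀ i, 0 < w i) (hw_sum : ∑ i, w i = 1)
    (η : ℝ) (hη : 0 < η) (c σ : ℝ) (hσ : 0 < σ)
    (ψ : ℝ → ℝ)
    (hψ : ∀ l : ℝ, ψ l
      = c * l + σ ^ 2 / 2 * l ^ 2 + η * ((∑ i, w i * α i / (l + α i)) - 1))
    (q : ℝ) (hq : 0 < q)
    (θ : Fin (n + 2) → ℝ) (hθ_anti : StrictAnti θ)
    (hθ_pole : ∀ i j, θ i ≠ -α j)
    (hθ_root : ∀ i, ψ (θ i) = q)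
    (hθ_simple : ∀ i, deriv ψ (θ i) ≠ 0) :
    ∀ l : ℝ, θ 0 < l →
      MeasureTheory.IntegrableOn
        (fun x => Real.exp (-(l * x)) * ∑ i, Real.exp (θ i * x) / deriv ψ (θ i))
        (Set.Ioi 0) ∧
      ψ l ≠ q ∧
      ∫ x in Set.Ioi (0:ℝ),
          Real.exp (-(l * x)) * ∑ i, Real.exp (θ i * x) / deriv ψ (θ i)
        = 1 / (ψ l - q) := by
  classical
  -- ## Setup
  set Qe : ℝ → ℝ := fun l => ∏ j, (l + α j) with hQe_def
  set Qp : ℝ[X] := ∏ j, (X + C (α j)) with hQp_def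
  set Np : ℝ[X] := C c * X * Qp + C (σ^2/2) * X^2 * Qp
      + C η * (∑ i, C (w i * α i) * ∏ j ∈ Finset.univ.erase i, (X + C (α j)))
      - C (η + q) * Qp with hNp_def
  set Pp : ℝ[X] := C (σ^2/2) * ∏ i, (X - C (θ i)) with hPp_def
  have hQeval : ∀ l : ℝ, Qp.eval l = Qe l := by
    intro l; simp [hQp_def, hQe_def, eval_prod]
  have hQmonic : Qp.Monic := monic_prod_of_monic _ _ fun j _ => monic_X_add_C _
  have hQdeg : Qp.natDegree = n := by
    rw [hQp_def, natDegree_prod_of_monic _ _ fun j _ => monic_X_add_C _]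
    simp [natDegree_X_add_C]
  -- ## Evaluation identity for the numerator polynomial
  have hNeval : ∀ l : ℝ, (∀ j, l + α j ≠ 0) → Np.eval l = (ψ l - q) * Qe l := by
    intro l hl
    have key : ∀ i : Fin n,
        w i * α i / (l + α i) * Qe l
          = w i * α i * ∏ j ∈ Finset.univ.erase i, (l + α j) := by
      intro i
      have hsplit : Qe l = (l + α i) * ∏ j ∈ Finset.univ.erase i, (l + α j) :=
        (Finset.mul_prod_erase _ _ (Finset.mem_univ i)).symm
      rw [hsplit]
      field_simp [hl i]
    have hS : (∑ i, w i * α i / (l + α i)) * Qe l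
        = ∑ i, w i * α i * ∏ j ∈ Finset.univ.erase i, (l + α j) := by
      rw [Finset.sum_mul]
      exact Finset.sum_congr rfl fun i _ => key i
    have hNe : Np.eval l = c * l * Qe l + σ^2/2 * l^2 * Qe l
        + η * (∑ i, w i * α i * ∏ j ∈ Finset.univ.erase i, (l + α j))
        - (η + q) * Qe l := by
      simp [hNp_def, eval_prod, eval_finset_sum, hQeval]
    rw [hNe, hψ l, ← hS]
    ring
  -- ## Np = Pp
  have hinj : Set.InjOn θ ((Finset.univ : Finset (Fin (n+2))) : Set (Fin (n+2))) :=
    fun a _ b _ h => hθ_anti.injective h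
  have hθ_ne : ∀ i j : Fin (n+2), i ≠ j → θ i ≠ θ j :=
    fun i j hij => fun h => hij (hθ_anti.injective h)
  have hPmon : (∏ i : Fin (n+2), (X - C (θ i))).Monic :=
    monic_prod_of_monic _ _ fun i _ => monic_X_sub_C _
  have hPdeg : (∏ i : Fin (n+2), (X - C (θ i))).natDegree = n + 2 := by
    rw [natDegree_prod_of_monic _ _ fun i _ => monic_X_sub_C _]
    simp [natDegree_X_sub_C]
  have hXQmon : (X^2 * Qp).Monic := (monic_X_pow 2).mul hQmonic
  have hXQdeg : (X^2 * Qp).natDegree = n + 2 := by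
    rw [(monic_X_pow 2).natDegree_mul hQmonic, natDegree_X_pow, hQdeg]; omega
  have hNP : Np = Pp := by
    refine Polynomial.eq_of_degree_sub_lt_of_eval_index_eq Finset.univ hinj ?_ ?_
    · rw [Finset.card_univ, Fintype.card_fin, Polynomial.degree_lt_iff_coeff_zero]
      intro m hm
      have hm' : n + 2 ≤ m := by exact_mod_cast hm
      have key : ∀ (r : ℝ) (pp : ℝ[X]), pp.Monic → pp.natDegree = n + 2 →
          (C r * pp).coeff m = if m = n + 2 then r else 0 := by
        intro r pp hmon hdeg
        rw [Polynomial.coeff_C_mul]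
        rcases eq_or_lt_of_le hm' with h | h
        · rw [if_pos h.symm, ← h, ← hdeg, hmon.coeff_natDegree, mul_one]
        · rw [if_neg (by omega), Polynomial.coeff_eq_zero_of_natDegree_lt (by omega), mul_zero]
      have h1 : (C c * X * Qp).coeff m = 0 := by
        apply Polynomial.coeff_eq_zero_of_natDegree_lt
        calc (C c * X * Qp).natDegree = (C c * (X * Qp)).natDegree := by rw [mul_assoc]
          _ ≤ (X * Qp).natDegree := natDegree_C_mul_le _ _
          _ ≤ X.natDegree + Qp.natDegree := natDegree_mul_le
          _ < m := by rw [natDegree_X, hQdeg]; omega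
      have h3 : (C η * (∑ i, C (w i * α i) * ∏ j ∈ Finset.univ.erase i,
          (X + C (α j)))).coeff m = 0 := by
        apply Polynomial.coeff_eq_zero_of_natDegree_lt
        refine lt_of_le_of_lt (natDegree_C_mul_le _ _) ?_
        refine lt_of_le_of_lt
          (Polynomial.natDegree_sum_le_of_forall_le _ _ fun i _ => ?_) (show n < m by omega)
        refine le_trans (natDegree_C_mul_le _ _) ?_
        refine le_trans (Polynomial.natDegree_prod_le _ _) ?_
        calc ∑ j ∈ Finset.univ.erase i, (X + C (α j)).natDegree
            = ∑ j ∈ Finset.univ.erase i, 1 := by simp [natDegree_X_add_C]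
          _ ≤ n := by simp
      have h4 : (C (η + q) * Qp).coeff m = 0 := by
        apply Polynomial.coeff_eq_zero_of_natDegree_lt
        exact lt_of_le_of_lt (natDegree_C_mul_le _ _) (by rw [hQdeg]; omega)
      have h2 : (C (σ^2/2) * X^2 * Qp).coeff m = if m = n + 2 then σ^2/2 else 0 := by
        rw [mul_assoc]; exact key _ _ hXQmon hXQdeg
      have h5 : Pp.coeff m = if m = n + 2 then σ^2/2 else 0 := key _ _ hPmon hPdeg
      rw [hNp_def, Polynomial.coeff_sub, Polynomial.coeff_sub, Polynomial.coeff_add,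
        Polynomial.coeff_add, h1, h2, h3, h4, h5]
      ring
    · intro i _
      have hpole : ∀ j, θ i + α j ≠ 0 := by
        intro j h
        exact hθ_pole i j (by linarith)
      rw [hNeval (θ i) hpole, hθ_root i, sub_self, zero_mul, hPp_def]
      rw [eval_mul, eval_prod]
      rw [Finset.prod_eq_zero (Finset.mem_univ i) (by simp)]
      ring
  -- ## The main factorization as functions
  have hmain : ∀ l : ℝ, (∀ j, l + α j ≠ 0) →
      (ψ l - q) * Qe l = σ^2/2 * ∏ i, (l - θ i) := by
    intro l hl
    rw [← hNeval l hl, hNP, hPp_def, eval_mul, eval_prod]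
    simp
  -- ## θ 0 > 0
  have hψ0 : ψ 0 = 0 := by
    rw [hψ 0]
    have h : ∀ i : Fin n, w i * α i / ((0:ℝ) + α i) = w i := by
      intro i
      rw [zero_add, mul_div_assoc, div_self (hα_pos i).ne', mul_one]
    simp only [h]
    rw [hw_sum]; ring
  have hθ0pos : 0 < θ 0 := by
    by_contra hcon
    push_neg at hcon
    have h0 : (ψ 0 - q) * Qe 0 = σ^2/2 * ∏ i, ((0:ℝ) - θ i) :=
      hmain 0 fun j => by have := hα_pos j; intro h; rw [zero_add] at h; linarith
    have hQ0 : 0 < Qe 0 := Finset.prod_pos fun j _ => by simpa using hα_pos j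
    have hlhs : (ψ 0 - q) * Qe 0 < 0 :=
      mul_neg_of_neg_of_pos (by rw [hψ0]; linarith) hQ0
    have hrhs : 0 ≤ σ^2/2 * ∏ i, ((0:ℝ) - θ i) := by
      apply mul_nonneg (by positivity)
      apply Finset.prod_nonneg
      intro i _
      have : θ i ≤ θ 0 := hθ_anti.antitone (Fin.zero_le i)
      linarith
    rw [h0] at hlhs; linarith
  -- ## Fix l
  intro l hl
  have hlθ : ∀ i, 0 < l - θ i := by
    intro i
    have : θ i ≤ θ 0 := hθ_anti.antitone (Fin.zero_le i)
    linarith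
  have hlpos : 0 < l := by have := hlθ 0; linarith
  have hlα : ∀ j, 0 < l + α j := fun j => by have := hα_pos j; linarith
  have hprodl : 0 < ∏ i, (l - θ i) := Finset.prod_pos fun i _ => hlθ i
  have hQl : 0 < Qe l := Finset.prod_pos fun j _ => hlα j
  have hψl : (ψ l - q) * Qe l = σ^2/2 * ∏ i, (l - θ i) := hmain l fun j => (hlα j).ne'
  have hψlq : 0 < ψ l - q := by
    have h1 : 0 < σ^2/2 * ∏ i, (l - θ i) := by positivity
    nlinarith
  have hne : ψ l ≠ q := by intro h; rw [h] at hψlq; simp at hψlq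
  -- ## Derivative formula
  have hQθ : ∀ i : Fin (n+2), Qe (θ i) ≠ 0 := by
    intro i
    refine Finset.prod_ne_zero_iff.mpr fun j _ => ?_
    intro h
    exact hθ_pole i j (by linarith)
  have hDval : ∀ i : Fin (n+2), deriv ψ (θ i)
      = σ^2/2 * (∏ k ∈ Finset.univ.erase i, (θ i - θ k)) / Qe (θ i) := by
    intro i
    have hQcont : Continuous Qe := by
      apply continuous_finset_prod
      intro j _
      exact continuous_id.add continuous_const
    have hopen : IsOpen {x : ℝ | Qe x ≠ 0} := isOpen_compl_singleton.preimage hQcont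
    have hev : ψ =ᶠ[nhds (θ i)] fun x => σ^2/2 * (∏ k, (x - θ k)) / Qe x + q := by
      filter_upwards [hopen.mem_nhds (hQθ i)] with x hx
      have hx0 : Qe x ≠ 0 := hx
      have hx' : ∀ j, x + α j ≠ 0 := fun j => Finset.prod_ne_zero_iff.mp hx0 j (Finset.mem_univ j)
      have hthis := hmain x hx'
      rw [← hthis, mul_div_cancel_right₀ _ hx0]
      ring
    have hF : HasDerivAt (fun x : ℝ => ∏ k, (x - θ k))
        (∏ j ∈ Finset.univ.erase i, (θ i - θ j)) (θ i) := by
      have h := HasDerivAt.fun_finsetProd (u := Finset.univ)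
        (f := fun k (x : ℝ) => x - θ k) (f' := fun k => 1) (x := θ i)
        (fun k _ => (hasDerivAt_id (θ i)).sub_const (θ k))
      have heq : (∑ k, (∏ j ∈ Finset.univ.erase k, (θ i - θ j)) • (1:ℝ))
          = ∏ j ∈ Finset.univ.erase i, (θ i - θ j) := by
        rw [Finset.sum_eq_single i]
        · simp
        · intro k _ hki
          have hz : ∏ j ∈ Finset.univ.erase k, (θ i - θ j) = 0 :=
            Finset.prod_eq_zero (Finset.mem_erase.mpr ⟨Ne.symm hki, Finset.mem_univ i⟩)
              (sub_self _)
          rw [hz, zero_smul]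
        · intro h; exact absurd (Finset.mem_univ i) h
      rw [heq] at h
      exact h
    have hFc : HasDerivAt (fun x : ℝ => σ^2/2 * ∏ k, (x - θ k))
        (σ^2/2 * ∏ j ∈ Finset.univ.erase i, (θ i - θ j)) (θ i) := hF.const_mul _
    have hG : HasDerivAt Qe (∑ k, (∏ j ∈ Finset.univ.erase k, (θ i + α j)) • (1:ℝ)) (θ i) := by
      have h := HasDerivAt.fun_finsetProd (u := Finset.univ)
        (f := fun k (x : ℝ) => x + α k) (f' := fun k => 1) (x := θ i)
        (fun k _ => (hasDerivAt_id (θ i)).add_const (α k))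
      exact h
    have hdiv := ((hFc.div hG (hQθ i)).add_const q).deriv
    simp only [Pi.div_apply] at hdiv
    have hP0 : ∏ k, (θ i - θ k) = 0 :=
      Finset.prod_eq_zero (Finset.mem_univ i) (sub_self _)
    rw [hev.deriv_eq, hdiv, hP0, mul_zero, zero_mul, sub_zero, pow_two (Qe (θ i)),
      mul_div_mul_right _ _ (hQθ i)]
  -- ## Integrability
  have hterm_int : ∀ i : Fin (n+2), IntegrableOn
      (fun x => Real.exp (-(l * x)) * (Real.exp (θ i * x) / deriv ψ (θ i)))
      (Set.Ioi (0:ℝ)) := by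
    intro i
    have heq : (fun x => Real.exp (-(l * x)) * (Real.exp (θ i * x) / deriv ψ (θ i)))
        = fun x => Real.exp (-(l - θ i) * x) * (1 / deriv ψ (θ i)) := by
      funext x
      rw [div_eq_mul_inv, ← mul_assoc, ← Real.exp_add, one_div]
      have harg : -(l * x) + θ i * x = -(l - θ i) * x := by ring
      rw [harg]
    rw [heq]
    exact (exp_neg_integrableOn_Ioi 0 (hlθ i)).mul_const _
  have hsum_eq : (fun x => Real.exp (-(l * x)) * ∑ i, Real.exp (θ i * x) / deriv ψ (θ i))
      = fun x => ∑ i, Real.exp (-(l * x)) * (Real.exp (θ i * x) / deriv ψ (θ i)) := by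
    funext x; rw [Finset.mul_sum]
  have hInt : IntegrableOn
      (fun x => Real.exp (-(l * x)) * ∑ i, Real.exp (θ i * x) / deriv ψ (θ i))
      (Set.Ioi (0:ℝ)) := by
    rw [hsum_eq]
    exact integrable_finset_sum _ fun i _ => hterm_int i
  refine ⟨hInt, hne, ?_⟩
  -- ## The integral
  have hIval : ∫ x in Set.Ioi (0:ℝ),
      Real.exp (-(l * x)) * ∑ i, Real.exp (θ i * x) / deriv ψ (θ i)
      = ∑ i, 1 / ((l - θ i) * deriv ψ (θ i)) := by
    rw [hsum_eq, integral_finset_sum _ fun i _ => hterm_int i]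
    refine Finset.sum_congr rfl fun i _ => ?_
    have heq : (fun x => Real.exp (-(l * x)) * (Real.exp (θ i * x) / deriv ψ (θ i)))
        = fun x => Real.exp (-(l - θ i) * x) * (1 / deriv ψ (θ i)) := by
      funext x
      rw [div_eq_mul_inv, ← mul_assoc, ← Real.exp_add, one_div]
      have harg : -(l * x) + θ i * x = -(l - θ i) * x := by ring
      rw [harg]
    rw [heq, MeasureTheory.integral_mul_const, helper_integral_exp (hlθ i)]
    rw [div_mul_div_comm, one_mul]
  rw [hIval]
  -- ## Lagrange interpolation identity
  have hLag := Lagrange.eq_interpolate (s := Finset.univ) (v := θ) (f := Qp) hinj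
    (by
      rw [Finset.card_univ, Fintype.card_fin]
      refine lt_of_le_of_lt (Polynomial.degree_le_natDegree) ?_
      rw [hQdeg]
      exact_mod_cast (by omega : n < n + 2))
  have hLagl : Qe l = ∑ i, Qe (θ i) *
      ∏ j ∈ Finset.univ.erase i, ((θ i - θ j)⁻¹ * (l - θ j)) := by
    have := congrArg (Polynomial.eval l) hLag
    rw [hQeval] at this
    rw [this]
    rw [Lagrange.interpolate_apply, Polynomial.eval_finset_sum]
    refine Finset.sum_congr rfl fun i _ => ?_
    rw [Polynomial.eval_mul, Polynomial.eval_C, hQeval, Lagrange.basis, Polynomial.eval_prod]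
    congr 1
    refine Finset.prod_congr rfl fun j _ => ?_
    rw [Lagrange.basisDivisor]
    simp
  -- ## Per-term identity and conclusion
  have hterm : ∀ i : Fin (n+2), 1 / ((l - θ i) * deriv ψ (θ i))
      = (Qe (θ i) * ∏ j ∈ Finset.univ.erase i, ((θ i - θ j)⁻¹ * (l - θ j)))
        / (σ^2/2 * ∏ k, (l - θ k)) := by
    intro i
    have hA : ∏ j ∈ Finset.univ.erase i, (θ i - θ j) ≠ 0 :=
      Finset.prod_ne_zero_iff.mpr fun j hj =>
        sub_ne_zero.mpr (hθ_ne i j (Ne.symm (Finset.mem_erase.mp hj).1))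
    have hB : ∏ j ∈ Finset.univ.erase i, (l - θ j) ≠ 0 :=
      Finset.prod_ne_zero_iff.mpr fun j _ => (hlθ j).ne'
    have hsplit : ∏ k, (l - θ k) = (l - θ i) * ∏ k ∈ Finset.univ.erase i, (l - θ k) :=
      (Finset.mul_prod_erase _ _ (Finset.mem_univ i)).symm
    have hdist : ∏ j ∈ Finset.univ.erase i, ((θ i - θ j)⁻¹ * (l - θ j))
        = (∏ j ∈ Finset.univ.erase i, (θ i - θ j))⁻¹ * ∏ j ∈ Finset.univ.erase i, (l - θ j) := by
      rw [Finset.prod_mul_distrib, Finset.prod_inv_distrib]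
    have hσ' : σ^2/2 ≠ 0 := by positivity
    rw [hsplit, hdist]
    exact helper_term_identity _ _ _ _ _ _ (hlθ i).ne' hA hB (hQθ i) hσ' (hDval i)
  rw [Finset.sum_congr rfl fun i _ => hterm i, ← Finset.sum_div, ← hLagl]
  rw [div_eq_div_iff (by positivity) (sub_ne_zero.mpr hne)]
  linear_combination hψl
end

section
/- Let p > 0 and q > 0. Let θ₁, …, θ_{n+2} be pairwise distinct real numbers, none equal to any −αⱼ, such that ψ(θᵢ) = p + q and ψ′(θᵢ) ≠ 0 for every i, and let φ be a real number, not equal to any θᵢ nor to any −αⱼ, with ψ(φ) = p. Then for every x ≥ 0, e^{φx} ( 1 + q ∫₀^x e^{−φz} ( ∑_{i=1}^{n+2} e^{θᵢ z}/ψ′(θᵢ) ) dz ) = q ∑_{i=1}^{n+2} e^{θᵢ x} / ( (θᵢ − φ) ψ′(θᵢ) ); that is, the function 𝓗^{(p,q)}(x) = e^{Φ(p)x}(1 + q∫₀^x e^{−Φ(p)z}W^{(p+q)}(z)dz) of the hyper-exponential jump-diffusion equals q ∑ e^{θᵢ x}/((θᵢ − Φ(p))ψ′(θᵢ)) for x ≥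 0 (Equation (4.5) of the paper). -/
open Polynomial Finset

lemma deriv_prod_eval {m : ℕ} (v : Fin m → ℝ) (i : Fin m) :
    (derivative (∏ k, (X - C (v k)))).eval (v i)
      = ∏ k ∈ univ.erase i, (v i - v k) := by
  have hfac : (∏ k, (X - C (v k)))
      = (X - C (v i)) * ∏ k ∈ univ.erase i, (X - C (v k)) :=
    (Finset.mul_prod_erase univ _ (mem_univ i)).symm
  rw [hfac, derivative_mul]
  simp [eval_prod]

lemma eval_erase_prod_zero {m : ℕ} (v : Fin m → ℝ) (i j : Fin m) (hij : i ≠ j) :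
    (∏ k ∈ univ.erase i, (X - C (v k))).eval (v j) = 0 := by
  rw [eval_prod]
  exact Finset.prod_eq_zero (Finset.mem_erase.2 ⟨Ne.symm hij, mem_univ j⟩) (by simp)

set_option maxHeartbeats 1000000 in
lemma key_identity
    (n : ℕ) (α w : Fin n → ℝ)
    (η : ℝ) (c σ : ℝ) (hσ : 0 < σ)
    (ψ : ℝ → ℝ)
    (hψ : ∀ l : ℝ, ψ l
      = c * l + σ ^ 2 / 2 * l ^ 2 + η * ((∑ i, w i * α i / (l + α i)) - 1))
    (p q : ℝ) (hq : 0 < q)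
    (θ : Fin (n + 2) → ℝ) (hθ_inj : Function.Injective θ)
    (hθ_pole : ∀ i j, θ i ≠ -α j)
    (hθ_root : ∀ i, ψ (θ i) = p + q)
    (φ : ℝ) (hφθ : ∀ i, φ ≠ θ i) (hφ_pole : ∀ j, φ ≠ -α j)
    (hφ_root : ψ φ = p) :
    q * ∑ i, 1 / ((θ i - φ) * deriv ψ (θ i)) = 1 := by
  classical
  set P : ℝ[X] := ∏ j, (X + C (α j)) with hP
  set Q : ℝ[X] := ∏ i, (X - C (θ i)) with hQ
  set S : ℝ[X] := ∑ j, C (w j * α j) * ∏ k ∈ univ.erase j, (X + C (α k)) with hS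
  set A : ℝ[X] := C c * X - C (η + p + q) with hA
  set F : ℝ[X] := A * P + C (σ^2/2) * (X^2 * P) + C η * S with hF
  have hσ2 : σ^2/2 ≠ 0 := by positivity
  -- basic facts about P
  have hPmonic : P.Monic := monic_prod_of_monic _ _ fun j _ => monic_X_add_C (α j)
  have hPdeg : P.natDegree = n := by
    rw [hP, natDegree_prod _ _ fun j _ => (monic_X_add_C (α j)).ne_zero]
    simp
  have hQmonic : Q.Monic := monic_prod_of_monic _ _ fun i _ => monic_X_sub_C (θ i)
  have hQdeg : Q.natDegree = n + 2 := by
    rw [hQ, natDegree_prod _ _ fun i _ => (monic_X_sub_C (θ i)).ne_zero]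
    simp
  have hPeval : ∀ l : ℝ, P.eval l = ∏ j, (l + α j) := by
    intro l; simp [hP, eval_prod]
  have hPne : ∀ l : ℝ, (∀ j, l ≠ -α j) → P.eval l ≠ 0 := by
    intro l hl
    rw [hPeval]
    exact Finset.prod_ne_zero_iff.2 fun j _ => fun h => hl j (by linarith)
  have hPne' : ∀ l : ℝ, P.eval l ≠ 0 → ∀ j, l ≠ -α j := by
    intro l hl j he
    apply hl
    rw [hPeval]
    exact Finset.prod_eq_zero (mem_univ j) (by rw [he]; ring)
  have hQθ : ∀ i, Q.eval (θ i) = 0 := by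
    intro i
    rw [hQ, eval_prod]
    exact Finset.prod_eq_zero (mem_univ i) (by simp)
  -- Lemma 1 : eval of F
  have hFeval : ∀ l : ℝ, P.eval l ≠ 0 → F.eval l = (ψ l - (p + q)) * P.eval l := by
    intro l hl
    have hSeval : S.eval l = (∑ j, w j * α j / (l + α j)) * P.eval l := by
      rw [hS, eval_finset_sum, Finset.sum_mul]
      refine Finset.sum_congr rfl fun j _ => ?_
      have hj : l + α j ≠ 0 := by
        intro h; exact hPne' l hl j (by linarith)
      have hsplit : P.eval l = (l + α j) * ∏ k ∈ univ.erase j, (l + α k) := by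
        rw [hPeval]
        exact (Finset.mul_prod_erase univ _ (mem_univ j)).symm
      rw [hsplit]
      simp only [eval_mul, eval_C, eval_prod, eval_add, eval_X]
      field_simp
    simp only [hF, eval_add, eval_mul, eval_sub, eval_C, eval_X, eval_pow, hA]
    rw [hSeval, hψ l]
    ring
  have hFθ : ∀ i, F.eval (θ i) = 0 := by
    intro i
    rw [hFeval (θ i) (hPne _ (hθ_pole i)), hθ_root i]
    ring
  -- Lemma 2 : F = C (σ²/2) * Q
  have hFQ : F = C (σ^2/2) * Q := by
    have hXP : (X^2 * P : ℝ[X]).Monic := (monic_X_pow 2).mul hPmonic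
    have hXPdeg : (X^2 * P : ℝ[X]).natDegree = n + 2 := by
      rw [(monic_X_pow 2).natDegree_mul hPmonic, natDegree_X_pow, hPdeg]; ring
    set D : ℝ[X] := F - C (σ^2/2) * Q with hD
    have hDeval : ∀ i, D.eval (θ i) = 0 := by
      intro i
      simp [hD, hFθ i, hQθ i]
    have hR : (X^2 * P - Q : ℝ[X]).natDegree ≤ n + 1 := by
      rcases eq_or_ne (X^2 * P - Q : ℝ[X]) 0 with h | h
      · simp [h]
      · have hdXP : (X^2 * P : ℝ[X]).degree = ((n + 2 : ℕ) : WithBot ℕ) := by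
          rw [degree_eq_natDegree hXP.ne_zero, hXPdeg]
        have hdQ : Q.degree = ((n + 2 : ℕ) : WithBot ℕ) := by
          rw [degree_eq_natDegree hQmonic.ne_zero, hQdeg]
        have hdeg : (X^2 * P - Q : ℝ[X]).degree < ((n + 2 : ℕ) : WithBot ℕ) := by
          have := degree_sub_lt (hdXP.trans hdQ.symm) hXP.ne_zero
            (by rw [hXP.leadingCoeff, hQmonic.leadingCoeff])
          rwa [hdXP] at this
        have := (natDegree_lt_iff_degree_lt h).2 hdeg
        omega
    have hDdeg : D.natDegree < n + 2 := by
      have hD' : D = (A * P + C η * S) + C (σ^2/2) * (X^2 * P - Q) := by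
        rw [hD, hF]; ring
      have hAP : (A * P).natDegree ≤ n + 1 := by
        refine le_trans natDegree_mul_le ?_
        have hAdeg : A.natDegree ≤ 1 := by
          rw [hA]; compute_degree
        omega
      have hSdeg : S.natDegree ≤ n + 1 := by
        rw [hS]
        refine natDegree_sum_le_of_forall_le _ _ fun j _ => ?_
        refine le_trans natDegree_mul_le ?_
        have : (∏ k ∈ univ.erase j, (X + C (α k))).natDegree ≤ n + 1 := by
          refine (natDegree_prod_le _ _).trans
            (le_trans (Finset.sum_le_sum (g := fun _ => 1) fun k _ => by simp) ?_)
          simp only [Finset.sum_const, smul_eq_mul, mul_one, Finset.card_erase_of_mem (mem_univ j), Finset.card_univ, Fintype.card_fin]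
          omega
        simp only [natDegree_C]
        omega
      rw [hD']
      have h1 : ((A * P + C η * S)).natDegree ≤ n + 1 :=
        (natDegree_add_le _ _).trans (max_le hAP ((natDegree_C_mul_le _ _).trans hSdeg))
      have h2 : (C (σ^2/2) * (X^2 * P - Q)).natDegree ≤ n + 1 :=
        (natDegree_C_mul_le _ _).trans hR
      exact lt_of_le_of_lt ((natDegree_add_le _ _).trans (max_le h1 h2)) (by omega)
    have hD0 := Polynomial.eq_zero_of_natDegree_lt_card_of_eval_eq_zero D hθ_inj hDeval
      (by simpa using hDdeg)
    rw [hD] at hD0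
    exact sub_eq_zero.mp hD0
  -- derivative of ψ at the roots
  set d : Fin (n + 2) → ℝ := fun i => ∏ k ∈ univ.erase i, (θ i - θ k) with hd
  have hd_ne : ∀ i, d i ≠ 0 := by
    intro i
    exact Finset.prod_ne_zero_iff.2 fun k hk =>
      sub_ne_zero.2 fun h => (Finset.mem_erase.1 hk).1 (hθ_inj h.symm)
  have hU : IsOpen {l : ℝ | P.eval l ≠ 0} := by
    have : Continuous fun l : ℝ => P.eval l := P.continuous
    exact isOpen_compl_singleton.preimage this
  have hderiv : ∀ i, deriv ψ (θ i) = (σ^2/2) * d i / P.eval (θ i) := by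
    intro i
    have hPθ : P.eval (θ i) ≠ 0 := hPne _ (hθ_pole i)
    have hev : ψ =ᶠ[nhds (θ i)] fun l => F.eval l / P.eval l + (p + q) := by
      filter_upwards [hU.mem_nhds hPθ] with l hl
      have := hFeval l hl
      field_simp
      linarith [this]
    rw [hev.deriv_eq]
    have h1 : HasDerivAt (fun l => F.eval l / P.eval l + (p + q))
        ((F.derivative.eval (θ i) * P.eval (θ i) - F.eval (θ i) * P.derivative.eval (θ i))
          / (P.eval (θ i))^2) (θ i) :=
      (((F.hasDerivAt (θ i)).div (P.hasDerivAt (θ i)) hPθ)).add_const _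
    rw [h1.deriv, hFθ i]
    have hF' : F.derivative.eval (θ i) = (σ^2/2) * d i := by
      rw [hFQ, derivative_C_mul, eval_mul, eval_C, hQ, deriv_prod_eval θ i]
    rw [hF']
    field_simp
    ring
  -- interpolation : G = P
  set G : ℝ[X] := ∑ i, C (P.eval (θ i) / d i) * ∏ k ∈ univ.erase i, (X - C (θ k)) with hG
  have hGeval : ∀ (l : ℝ), G.eval l = ∑ i, P.eval (θ i) / d i * ∏ k ∈ univ.erase i, (l - θ k) := by
    intro l
    rw [hG, eval_finset_sum]
    refine Finset.sum_congr rfl fun i _ => by simp [eval_prod]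
  have hGP : G = P := by
    have hDeval : ∀ j, (G - P).eval (θ j) = 0 := by
      intro j
      rw [eval_sub, hGeval]
      have : ∑ i, P.eval (θ i) / d i * ∏ k ∈ univ.erase i, (θ j - θ k)
          = P.eval (θ j) / d j * ∏ k ∈ univ.erase j, (θ j - θ k) := by
        refine Finset.sum_eq_single j (fun i _ hij => ?_) (by simp)
        have : ∏ k ∈ univ.erase i, (θ j - θ k) = 0 :=
          Finset.prod_eq_zero (Finset.mem_erase.2 ⟨Ne.symm hij, mem_univ j⟩) (by simp)
        rw [this, mul_zero]
      rw [this, hd, div_mul_cancel₀ _ (hd_ne j), sub_self]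
    have hGdeg : G.natDegree ≤ n + 1 := by
      rw [hG]
      refine natDegree_sum_le_of_forall_le _ _ fun i _ => ?_
      refine le_trans natDegree_mul_le ?_
      have : (∏ k ∈ univ.erase i, (X - C (θ k))).natDegree ≤ n + 1 := by
        refine (natDegree_prod_le _ _).trans
          (le_trans (Finset.sum_le_sum (g := fun _ => 1) fun k _ => by simp) ?_)
        simp [Finset.card_erase_of_mem, Finset.card_univ]
      simp only [natDegree_C]
      omega
    have hDdeg : (G - P).natDegree < n + 2 := by
      have := (natDegree_sub_le G P).trans (max_le hGdeg (by omega : P.natDegree ≤ n + 1))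
      omega
    have hD0 := Polynomial.eq_zero_of_natDegree_lt_card_of_eval_eq_zero (G - P) hθ_inj hDeval
      (by simpa using hDdeg)
    exact sub_eq_zero.mp hD0
  -- evaluate at φ
  have hQφ : Q.eval φ = ∏ k, (φ - θ k) := by simp [hQ, eval_prod]
  have hQφne : Q.eval φ ≠ 0 := by
    rw [hQφ]
    exact Finset.prod_ne_zero_iff.2 fun k _ => sub_ne_zero.2 (hφθ k)
  have hPφne : P.eval φ ≠ 0 := hPne _ hφ_pole
  have hT : Q.eval φ * (∑ i, P.eval (θ i) / (d i * (φ - θ i))) = P.eval φ := by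
    have h1 : G.eval φ = P.eval φ := by rw [hGP]
    rw [hGeval] at h1
    rw [Finset.mul_sum]
    rw [← h1]
    refine Finset.sum_congr rfl fun i _ => ?_
    have hsplit : Q.eval φ = (φ - θ i) * ∏ k ∈ univ.erase i, (φ - θ k) := by
      rw [hQφ]
      exact (Finset.mul_prod_erase univ _ (mem_univ i)).symm
    rw [hsplit]
    have hφi : φ - θ i ≠ 0 := sub_ne_zero.2 (hφθ i)
    have hdi := hd_ne i
    field_simp
  have hkey : -q * P.eval φ = σ^2/2 * Q.eval φ := by
    have h1 := hFeval φ hPφne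
    rw [hφ_root, hFQ] at h1
    simp only [eval_mul, eval_C] at h1
    linarith [h1]
  -- final computation
  have hrw : ∀ i, 1 / ((θ i - φ) * deriv ψ (θ i))
      = -(2/σ^2) * (P.eval (θ i) / (d i * (φ - θ i))) := by
    intro i
    rw [hderiv i]
    have hPθ : P.eval (θ i) ≠ 0 := hPne _ (hθ_pole i)
    have hφi : φ - θ i ≠ 0 := sub_ne_zero.2 (hφθ i)
    have hθφ : θ i - φ ≠ 0 := sub_ne_zero.2 fun h => hφθ i h.symm
    have hσ' : σ ≠ 0 := ne_of_gt hσ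
    field_simp
    rw [show φ - θ i = -(θ i - φ) by ring, neg_div]
  rw [Finset.sum_congr rfl fun i _ => hrw i, ← Finset.mul_sum]
  have hTval : (∑ i, P.eval (θ i) / (d i * (φ - θ i))) = P.eval φ / Q.eval φ := by
    rw [eq_div_iff hQφne, mul_comm]
    exact hT
  rw [hTval]
  have hσ' : σ ≠ 0 := ne_of_gt hσ
  have hq' : q ≠ 0 := ne_of_gt hq
  have hPφval : P.eval φ = -(σ^2/2) * Q.eval φ / q := by
    field_simp
    linarith [hkey]
  rw [hPφval]
  field_simp
lemma exp_mul_integral (c : ℝ) (hc : c ≠ 0) (x : ℝ) :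
    ∫ z in (0:ℝ)..x, Real.exp (c * z) = (Real.exp (c * x) - 1) / c := by
  have h : ∀ z : ℝ, HasDerivAt (fun z => Real.exp (c * z) / c) (Real.exp (c * z)) z := by
    intro z
    have h1 : HasDerivAt (fun z : ℝ => c * z) c z := by simpa using (hasDerivAt_id z).const_mul c
    have h2 := (Real.hasDerivAt_exp (c * z)).comp z h1
    simpa [mul_comm, mul_div_assoc, mul_div_cancel_left₀ _ hc] using h2.div_const c
  rw [intervalIntegral.integral_eq_sub_of_hasDerivAt (fun z _ => h z)
    ((Real.continuous_exp.comp (continuous_const.mul continuous_id)).intervalIntegrable 0 x)]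
  simp [sub_div]

/-- Equation (4.5) of the paper: for the hyper-exponential jump-diffusion,
𝓗^{(p,q)}(x) = e^{Φ(p)x}(1 + q∫₀ˣ e^{−Φ(p)z}W^{(p+q)}(z)dz)
             = q ∑ᵢ e^{θᵢx}/((θᵢ − Φ(p))ψ′(θᵢ)) for x ≥ 0,
where the θᵢ are the roots of ψ = p + q and Φ(p) is a root of ψ = p. -/
theorem hyperexp_H_function
    (n : ℕ) (hn : 1 ≤ n)
    (α w : Fin n → ℝ)
    (hα_pos : ∀ i, 0 < α i) (hα_mono : StrictMono α)
    (hw_pos : ∀ i, 0 < w i) (hw_sum : ∑ i, w i = 1)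
    (η : ℝ) (hη : 0 < η) (c σ : ℝ) (hσ : 0 < σ)
    (ψ : ℝ → ℝ)
    (hψ : ∀ l : ℝ, ψ l
      = c * l + σ ^ 2 / 2 * l ^ 2 + η * ((∑ i, w i * α i / (l + α i)) - 1))
    (p q : ℝ) (hp : 0 < p) (hq : 0 < q)
    (θ : Fin (n + 2) → ℝ) (hθ_inj : Function.Injective θ)
    (hθ_pole : ∀ i j, θ i ≠ -α j)
    (hθ_root : ∀ i, ψ (θ i) = p + q)
    (hθ_simple : ∀ i, deriv ψ (θ i) ≠ 0)
    (φ : ℝ) (hφθ : ∀ i, φ ≠ θ i) (hφ_pole : ∀ j, φ ≠ -α j)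
    (hφ_root : ψ φ = p) :
    ∀ x : ℝ, 0 ≤ x →
      Real.exp (φ * x) *
          (1 + q * ∫ z in (0:ℝ)..x,
            Real.exp (-(φ * z)) * ∑ i, Real.exp (θ i * z) / deriv ψ (θ i))
        = q * ∑ i, Real.exp (θ i * x) / ((θ i - φ) * deriv ψ (θ i)) := by
  intro x hx
  have hkey := key_identity n α w η c σ hσ ψ hψ p q hq θ hθ_inj hθ_pole hθ_root
    φ hφθ hφ_pole hφ_root
  have hθφ : ∀ i, θ i - φ ≠ 0 := fun i => sub_ne_zero.2 fun h => hφθ i h.symm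
  have hE : ∀ i, (θ i - φ) * deriv ψ (θ i) ≠ 0 :=
    fun i => mul_ne_zero (hθφ i) (hθ_simple i)
  have hInt : (∫ z in (0:ℝ)..x,
        Real.exp (-(φ * z)) * ∑ i, Real.exp (θ i * z) / deriv ψ (θ i))
      = ∑ i, (Real.exp ((θ i - φ) * x) - 1) / ((θ i - φ) * deriv ψ (θ i)) := by
    have hfun : ∀ z ∈ Set.uIcc (0:ℝ) x,
        Real.exp (-(φ * z)) * ∑ i, Real.exp (θ i * z) / deriv ψ (θ i)
          = ∑ i, Real.exp ((θ i - φ) * z) / deriv ψ (θ i) := by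
      intro z _
      rw [Finset.mul_sum]
      refine Finset.sum_congr rfl fun i _ => ?_
      rw [mul_div_assoc', ← Real.exp_add]
      ring_nf
    have hswap := intervalIntegral.integral_finset_sum (μ := MeasureTheory.volume)
      (a := (0:ℝ)) (b := x) (s := Finset.univ)
      (f := fun (i : Fin (n+2)) (z : ℝ) => Real.exp ((θ i - φ) * z) / deriv ψ (θ i))
      (fun i _ =>
        ((Real.continuous_exp.comp (continuous_const.mul continuous_id)).div_const
          _).intervalIntegrable 0 x)
    rw [intervalIntegral.integral_congr hfun, hswap]
    refine Finset.sum_congr rfl fun i _ => ?_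
    rw [intervalIntegral.integral_div, exp_mul_integral (θ i - φ) (hθφ i) x, div_div]
  rw [hInt]
  have hterm : ∀ i : Fin (n + 2),
      Real.exp (φ * x) * ((Real.exp ((θ i - φ) * x) - 1) / ((θ i - φ) * deriv ψ (θ i)))
        = Real.exp (θ i * x) / ((θ i - φ) * deriv ψ (θ i))
          - Real.exp (φ * x) * (1 / ((θ i - φ) * deriv ψ (θ i))) := by
    intro i
    have hex : Real.exp (φ * x) * Real.exp ((θ i - φ) * x) = Real.exp (θ i * x) := by
      rw [← Real.exp_add]; ring_nf
    rw [mul_div_assoc', mul_sub, mul_one, hex, sub_div, mul_one_div]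
  have hsum : Real.exp (φ * x)
        * ∑ i, (Real.exp ((θ i - φ) * x) - 1) / ((θ i - φ) * deriv ψ (θ i))
      = (∑ i, Real.exp (θ i * x) / ((θ i - φ) * deriv ψ (θ i)))
        - Real.exp (φ * x) * ∑ i, 1 / ((θ i - φ) * deriv ψ (θ i)) := by
    rw [Finset.mul_sum, Finset.mul_sum, ← Finset.sum_sub_distrib]
    exact Finset.sum_congr rfl fun i _ => hterm i
  linear_combination q * hsum - Real.exp (φ * x) * hkey
end

section
/- Let p > 0 and q > 0. Let β₁, …, β_{n+2} be pairwise distinct real numbers, none equal to any −αₖ, with ψ(βᵢ) = p + q and ψ′(βᵢ) ≠ 0 for every i, and let γ₁, …, γ_{n+2} be pairwise distinct real numbers, none equal to any −αₖ, with ψ(γⱼ) = p and ψ′(γⱼ) ≠ 0 for every j (so that βᵢ ≠ γⱼ for all i, j). Then for all real numbers a, x with 0 ≤ a ≤ x, ∑_{i=1}^{n+2} e^{βᵢ x}/ψ′(βᵢ) − q ∫₀^a ( ∑_{i=1}^{n+2} e^{βᵢ (x−z)}/ψ′(βᵢ) ) ( ∑_{j=1}^{n+2} e^{γⱼ z}/ψ′(γⱼ)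 ) dz = q ∑_{i=1}^{n+2} ∑_{j=1}^{n+2} exp(βᵢ x + (γⱼ − βᵢ) a) / ( (βᵢ − γⱼ) ψ′(βᵢ) ψ′(γⱼ) ); that is, the function 𝓦_a^{(p,q)}(x) = W^{(p+q)}(x) − q∫₀^a W^{(p+q)}(x−z)W^{(p)}(z)dz of the hyper-exponential jump-diffusion is given by the stated double sum (the explicit formula for 𝓦_a^{(p,q)} in Section 4.2 of the paper). -/
open Polynomial Finset

private lemma integral_exp_mul_aux (c a : ℝ) (hc : c ≠ 0) :
    ∫ z in (0:ℝ)..a, Real.exp (c * z) = (Real.exp (c * a) - 1) / c := by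
  have h : ∀ z ∈ Set.uIcc (0:ℝ) a,
      HasDerivAt (fun z => Real.exp (c * z) / c) (Real.exp (c * z)) z := by
    intro z _
    have h1 : HasDerivAt (fun z : ℝ => c * z) c z := by
      simpa using (hasDerivAt_id z).const_mul c
    have h2 := (Real.hasDerivAt_exp (c * z)).comp z h1
    have h3 := h2.div_const c
    exact h3.congr_deriv (mul_div_cancel_right₀ _ hc)
  rw [intervalIntegral.integral_eq_sub_of_hasDerivAt h
    ((Real.continuous_exp.comp (continuous_const.mul continuous_id)).intervalIntegrable _ _)]
  simp [sub_div]

/-- The explicit formula for 𝓦_a^{(p,q)} in Section 4.2 of the paper: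
W^{(p+q)}(x) − q∫₀ᵃ W^{(p+q)}(x−z)W^{(p)}(z)dz
  = q ∑ᵢ ∑ⱼ e^{βᵢx + (γⱼ−βᵢ)a}/((βᵢ − γⱼ)ψ′(βᵢ)ψ′(γⱼ)) for 0 ≤ a ≤ x,
where β (resp. γ) enumerates the roots of ψ = p + q (resp. ψ = p). -/
theorem hyperexp_W_script
    (n : ℕ) (hn : 1 ≤ n)
    (α w : Fin n → ℝ)
    (hα_pos : ∀ i, 0 < α i) (hα_mono : StrictMono α)
    (hw_pos : ∀ i, 0 < w i) (hw_sum : ∑ i, w i = 1)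
    (η : ℝ) (hη : 0 < η) (c σ : ℝ) (hσ : 0 < σ)
    (ψ : ℝ → ℝ)
    (hψ : ∀ l : ℝ, ψ l
      = c * l + σ ^ 2 / 2 * l ^ 2 + η * ((∑ i, w i * α i / (l + α i)) - 1))
    (p q : ℝ) (hp : 0 < p) (hq : 0 < q)
    (β : Fin (n + 2) → ℝ) (hβ_inj : Function.Injective β)
    (hβ_pole : ∀ i k, β i ≠ -α k)
    (hβ_root : ∀ i, ψ (β i) = p + q)
    (hβ_simple : ∀ i, deriv ψ (β i) ≠ 0)
    (γ : Fin (n + 2) → ℝ) (hγ_inj : Function.Injective γ)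
    (hγ_pole : ∀ j k, γ j ≠ -α k)
    (hγ_root : ∀ j, ψ (γ j) = p)
    (hγ_simple : ∀ j, deriv ψ (γ j) ≠ 0) :
    ∀ a x : ℝ, 0 ≤ a → a ≤ x →
      (∑ i, Real.exp (β i * x) / deriv ψ (β i))
        - q * ∫ z in (0:ℝ)..a,
            (∑ i, Real.exp (β i * (x - z)) / deriv ψ (β i)) *
            (∑ j, Real.exp (γ j * z) / deriv ψ (γ j))
        = q * ∑ i, ∑ j,
            Real.exp (β i * x + (γ j - β i) * a)
              / ((β i - γ j) * deriv ψ (β i) * deriv ψ (γ j)) := by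
  classical
  -- basic nonvanishing facts
  have hσ2 : (σ^2/2 : ℝ) ≠ 0 := by positivity
  have hβγ : ∀ i j, β i ≠ γ j := by
    intro i j h
    have h1 := hβ_root i
    rw [h, hγ_root j] at h1
    linarith
  have hβα : ∀ i k, β i + α k ≠ 0 := by
    intro i k h; exact hβ_pole i k (by linarith)
  have hγα : ∀ j k, γ j + α k ≠ 0 := by
    intro j k h; exact hγ_pole j k (by linarith)
  -- polynomials A and N
  set A : Polynomial ℝ := ∏ k, (X + C (α k)) with hA_def
  set N : Polynomial ℝ := ∏ j, (X - C (γ j)) with hN_def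
  have hAeval : ∀ l : ℝ, A.eval l = ∏ k, (l + α k) := by
    intro l; simp [hA_def, eval_prod]
  have hNeval : ∀ l : ℝ, N.eval l = ∏ j, (l - γ j) := by
    intro l; simp [hN_def, eval_prod]
  have hAmonic : A.Monic := monic_prod_of_monic _ _ fun k _ => monic_X_add_C _
  have hNmonic : N.Monic := monic_prod_of_monic _ _ fun j _ => monic_X_sub_C _
  have hAdeg : A.natDegree = n := by
    rw [hA_def, natDegree_prod _ _ (fun k _ => (monic_X_add_C (α k)).ne_zero)]
    simp [natDegree_X_add_C]
  have hNdeg : N.natDegree = n + 2 := by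
    rw [hN_def, natDegree_prod _ _ (fun j _ => (monic_X_sub_C (γ j)).ne_zero)]
    simp [natDegree_X_sub_C]
  have hAγne : ∀ j, (∏ k, (γ j + α k)) ≠ 0 :=
    fun j => Finset.prod_ne_zero_iff.2 fun k _ => hγα j k
  have hNβne : ∀ i, (∏ j, (β i - γ j)) ≠ 0 :=
    fun i => Finset.prod_ne_zero_iff.2 fun j _ => sub_ne_zero.2 (hβγ i j)
  have hMγne : ∀ j, (∏ j' ∈ univ.erase j, (γ j - γ j')) ≠ 0 := by
    intro j
    refine Finset.prod_ne_zero_iff.2 fun j' hj' => sub_ne_zero.2 fun h => ?_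
    exact (Finset.mem_erase.1 hj').1 (hγ_inj h.symm)
  -- the rational expression for ψ - p
  have hrat : ∀ l : ℝ, (∀ k, l + α k ≠ 0) →
      (ψ l - p) * ∏ k, (l + α k) = σ^2/2 * ∏ j, (l - γ j) := by
    set S : Polynomial ℝ := ∑ i, C (w i * α i) * ∏ k ∈ univ.erase i, (X + C (α k)) with hS_def
    set P : Polynomial ℝ := (C c * X + C (σ^2/2) * X^2 - C (η + p)) * A + C η * S with hP_def
    have hPeval : ∀ l : ℝ, (∀ k, l + α k ≠ 0) → P.eval l = (ψ l - p) * ∏ k, (l + α k) := by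
      intro l hl
      have key : (∑ i, w i * α i / (l + α i)) * ∏ k, (l + α k)
          = ∑ i, w i * α i * ∏ k ∈ univ.erase i, (l + α k) := by
        rw [Finset.sum_mul]
        refine Finset.sum_congr rfl fun i _ => ?_
        rw [← Finset.mul_prod_erase univ (fun k => l + α k) (mem_univ i),
          div_mul_eq_mul_div, mul_div_assoc, mul_div_cancel_left₀ _ (hl i)]
      rw [hψ]
      simp only [hP_def, eval_add, eval_mul, eval_sub, eval_C, eval_X, eval_pow, hAeval,
        hS_def, eval_finset_sum, eval_mul, eval_C, eval_prod, eval_add, eval_X]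
      linear_combination (-η) * key
    -- the difference polynomial
    set D : Polynomial ℝ := P - C (σ^2/2) * N with hD_def
    have hprodd : ∀ t : Finset (Fin n), (∏ k ∈ t, ((X:ℝ[X]) + C (α k))).natDegree ≤ t.card := by
      intro t
      refine le_trans (natDegree_prod_le _ _) ?_
      simp [natDegree_X_add_C]
    have hX2A : ((X:ℝ[X])^2 * A).natDegree = n + 2 := by
      rw [(monic_X_pow 2).natDegree_mul hAmonic, natDegree_X_pow, hAdeg]; ring
    have hsub : ((X:ℝ[X])^2 * A - N).natDegree ≤ n + 1 := by
      by_cases h0 : (X:ℝ[X])^2 * A - N = 0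
      · simp [h0]
      have hm : ((X:ℝ[X])^2 * A).Monic := (monic_X_pow 2).mul hAmonic
      have hdeq : ((X:ℝ[X])^2 * A).degree = N.degree := by
        rw [degree_eq_natDegree hm.ne_zero, degree_eq_natDegree hNmonic.ne_zero, hX2A, hNdeg]
      have hdl := degree_sub_lt hdeq hm.ne_zero
        (by rw [hm.leadingCoeff, hNmonic.leadingCoeff])
      rw [degree_eq_natDegree hm.ne_zero, hX2A] at hdl
      have := (natDegree_lt_iff_degree_lt h0).2 hdl
      omega
    have hD_eq : D = C c * X * A + C (σ^2/2) * ((X:ℝ[X])^2 * A - N) - C (η + p) * A + C η * S := by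
      rw [hD_def, hP_def]; ring
    have hSdeg : S.natDegree ≤ n + 1 := by
      rw [hS_def]
      refine natDegree_sum_le_of_forall_le _ _ fun i _ => ?_
      refine le_trans (natDegree_mul_le) ?_
      refine le_trans (add_le_add (natDegree_C _).le (hprodd _)) ?_
      have := Finset.card_erase_le (s := (univ : Finset (Fin n))) (a := i)
      simp only [Finset.card_univ, Fintype.card_fin] at this ⊢
      omega
    have hDdeg : D.natDegree ≤ n + 1 := by
      rw [hD_eq]
      refine le_trans (natDegree_add_le _ _) (max_le ?_ ?_)
      · refine le_trans (natDegree_sub_le _ _) (max_le ?_ ?_)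
        · refine le_trans (natDegree_add_le _ _) (max_le ?_ ?_)
          · refine le_trans natDegree_mul_le ?_
            have h1 : (C c * X : ℝ[X]).natDegree ≤ 1 :=
              le_trans (natDegree_C_mul_le _ _) natDegree_X.le
            have h2 := add_le_add h1 hAdeg.le
            linarith
          · refine le_trans natDegree_mul_le ?_
            simpa [natDegree_C] using hsub
        · refine le_trans natDegree_mul_le ?_
          simp [natDegree_C, hAdeg]
      · refine le_trans natDegree_mul_le ?_
        simpa [natDegree_C] using hSdeg
    have hDroot : ∀ j, D.eval (γ j) = 0 := by
      intro j
      rw [hD_def]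
      simp only [eval_sub, eval_mul, eval_C]
      have h0 : (∏ j', (γ j - γ j')) = 0 :=
        Finset.prod_eq_zero (mem_univ j) (sub_self (γ j))
      rw [hPeval (γ j) (hγα j), hγ_root j, hNeval, h0]
      ring
    have hD0 : D = 0 := by
      refine Polynomial.eq_zero_of_natDegree_lt_card_of_eval_eq_zero D hγ_inj hDroot ?_
      rw [Fintype.card_fin]
      omega
    intro l hl
    have hPN : P = C (σ^2/2) * N := by rwa [hD_def, sub_eq_zero] at hD0
    have h2 : P.eval l = σ^2/2 * N.eval l := by rw [hPN]; simp
    rw [hPeval l hl, hNeval] at h2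
    exact h2
  have hq' : ∀ i, q * ∏ k, (β i + α k) = σ^2/2 * ∏ j, (β i - γ j) := by
    intro i
    have h := hrat (β i) (hβα i)
    rw [hβ_root i] at h
    simpa using h
  -- derivative of ψ at the γ roots
  have hderiv : ∀ j, deriv ψ (γ j)
      = σ^2/2 * (∏ j' ∈ univ.erase j, (γ j - γ j')) / ∏ k, (γ j + α k) := by
    intro j
    have hAγ : A.eval (γ j) ≠ 0 := by
      rw [hAeval]; exact hAγne j
    set g : ℝ → ℝ := fun l => p + σ^2/2 * (N.eval l / A.eval l) with hg_def
    have hU : ψ =ᶠ[nhds (γ j)] g := by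
      have hopen : IsOpen {l : ℝ | A.eval l ≠ 0} :=
        isOpen_compl_singleton.preimage A.continuous
      filter_upwards [hopen.mem_nhds hAγ] with l hl
      have hl' : ∀ k, l + α k ≠ 0 := by
        rw [hAeval] at hl
        exact fun k h => hl (Finset.prod_eq_zero (mem_univ k) h)
      have e1 : ψ l - p = σ^2/2 * (N.eval l / A.eval l) := by
        rw [mul_div_assoc', eq_div_iff hl, hAeval, hNeval]
        exact hrat l hl'
      simp only [hg_def]
      linarith [e1]
    rw [hU.deriv_eq]
    have hN0 : N.eval (γ j) = 0 := by
      rw [hNeval]; exact Finset.prod_eq_zero (mem_univ j) (sub_self (γ j))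
    have hN' : N.derivative.eval (γ j) = ∏ j' ∈ univ.erase j, (γ j - γ j') := by
      have hsplit : N = (X - C (γ j)) * ∏ j' ∈ univ.erase j, (X - C (γ j')) :=
        (Finset.mul_prod_erase univ _ (mem_univ j)).symm
      rw [hsplit, derivative_mul, derivative_X_sub_C]
      simp [eval_prod]
    have hd : HasDerivAt g (σ^2/2 * ((N.derivative.eval (γ j) * A.eval (γ j)
        - N.eval (γ j) * A.derivative.eval (γ j)) / (A.eval (γ j))^2)) (γ j) := by
      exact (((N.hasDerivAt (γ j)).div (A.hasDerivAt (γ j)) hAγ).const_mul (σ^2/2)).const_add p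
    rw [hd.deriv, hN0, hN', zero_mul, sub_zero, pow_two (eval (γ j) A),
      mul_div_mul_right _ _ hAγ, mul_div_assoc', hAeval]
  -- Lagrange interpolation of A at the nodes γ
  have hlag : ∀ i, ∑ j, (∏ k, (γ j + α k)) / (∏ j' ∈ univ.erase j, (γ j - γ j'))
      * ∏ j' ∈ univ.erase j, (β i - γ j') = ∏ k, (β i + α k) := by
    intro i
    set L : Polynomial ℝ := (∏ k, (X + C (α k)))
      - ∑ j, C ((∏ k, (γ j + α k)) / ∏ j' ∈ univ.erase j, (γ j - γ j'))
        * ∏ j' ∈ univ.erase j, (X - C (γ j')) with hL_def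
    have hprodd : ∀ (m : ℕ) (t : Finset (Fin m)) (f : Fin m → ℝ),
        (∏ k ∈ t, ((X:ℝ[X]) - C (f k))).natDegree ≤ t.card := by
      intro m t f
      refine le_trans (natDegree_prod_le _ _) ?_
      simp [natDegree_X_sub_C]
    have hLdeg : L.natDegree ≤ n + 1 := by
      rw [hL_def]
      refine le_trans (natDegree_sub_le _ _) (max_le ?_ ?_)
      · refine le_trans (natDegree_prod_le _ _) ?_
        simp [natDegree_X_add_C]
      · refine natDegree_sum_le_of_forall_le _ _ fun j _ => ?_
        refine le_trans natDegree_mul_le ?_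
        refine le_trans (add_le_add (natDegree_C _).le (hprodd _ _ _)) ?_
        rw [Finset.card_erase_of_mem (mem_univ j)]
        simp
    have hLroot : ∀ j, L.eval (γ j) = 0 := by
      intro j
      rw [hL_def]
      simp only [eval_sub, eval_finset_sum, eval_mul, eval_C, eval_prod, eval_add, eval_X]
      rw [Finset.sum_eq_single j]
      · rw [div_mul_cancel₀ _ (hMγne j)]
        exact sub_self _
      · intro j'' _ hj''
        have : (∏ j' ∈ univ.erase j'', (γ j - γ j')) = 0 :=
          Finset.prod_eq_zero (Finset.mem_erase.2 ⟨Ne.symm hj'', mem_univ j⟩) (sub_self (γ j))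
        rw [this, mul_zero]
      · intro h; exact absurd (mem_univ j) h
    have hL0 : L = 0 := by
      refine Polynomial.eq_zero_of_natDegree_lt_card_of_eval_eq_zero L hγ_inj hLroot ?_
      rw [Fintype.card_fin]; omega
    have := congrArg (eval (β i)) hL0
    rw [hL_def] at this
    simp only [eval_sub, eval_finset_sum, eval_mul, eval_C, eval_prod, eval_add, eval_X,
      eval_zero] at this
    linarith [this]
  -- the key partial-fraction identity
  have hkey : ∀ i, ∑ j, 1 / ((β i - γ j) * deriv ψ (γ j)) = 1 / q := by
    intro i
    have h1 : ∀ j, 1 / ((β i - γ j) * deriv ψ (γ j))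
        = (∏ k, (γ j + α k)) / (∏ j' ∈ univ.erase j, (γ j - γ j'))
          * (∏ j' ∈ univ.erase j, (β i - γ j')) / (σ^2/2 * ∏ j', (β i - γ j')) := by
      intro j
      have hsplit : (∏ j', (β i - γ j')) = (β i - γ j) * ∏ j' ∈ univ.erase j, (β i - γ j') :=
        (Finset.mul_prod_erase univ _ (mem_univ j)).symm
      have h2 : β i - γ j ≠ 0 := sub_ne_zero.2 (hβγ i j)
      have h3 : (∏ j' ∈ univ.erase j, (β i - γ j')) ≠ 0 :=
        Finset.prod_ne_zero_iff.2 fun j' _ => sub_ne_zero.2 (hβγ i j')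
      have hden1 : (β i - γ j) * deriv ψ (γ j) ≠ 0 := mul_ne_zero h2 (hγ_simple j)
      have hden2 : σ^2/2 * ((β i - γ j) * ∏ j' ∈ univ.erase j, (β i - γ j')) ≠ 0 :=
        mul_ne_zero hσ2 (mul_ne_zero h2 h3)
      rw [hsplit, div_eq_div_iff hden1 hden2, hderiv j]
      field_simp [hMγne j, hAγne j]
    rw [Finset.sum_congr rfl fun j _ => h1 j, ← Finset.sum_div, hlag i,
      div_eq_div_iff (mul_ne_zero hσ2 (hNβne i)) hq.ne']
    linarith [hq' i]
  -- the analytic part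
  intro a x ha hax
  have hc : ∀ i j, γ j - β i ≠ 0 := fun i j => sub_ne_zero.2 (Ne.symm (hβγ i j))
  have hint : (∫ z in (0:ℝ)..a,
      (∑ i, Real.exp (β i * (x - z)) / deriv ψ (β i)) *
      (∑ j, Real.exp (γ j * z) / deriv ψ (γ j)))
      = ∑ i, ∑ j, Real.exp (β i * x) / (deriv ψ (β i) * deriv ψ (γ j))
          * ((Real.exp ((γ j - β i) * a) - 1) / (γ j - β i)) := by
    have heq : Set.EqOn (fun z => (∑ i, Real.exp (β i * (x - z)) / deriv ψ (β i)) *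
        (∑ j, Real.exp (γ j * z) / deriv ψ (γ j)))
        (fun z => ∑ i, ∑ j, Real.exp (β i * x) / (deriv ψ (β i) * deriv ψ (γ j))
          * Real.exp ((γ j - β i) * z)) (Set.uIcc (0:ℝ) a) := by
      intro z _
      simp only
      rw [Finset.sum_mul_sum]
      refine Finset.sum_congr rfl fun i _ => Finset.sum_congr rfl fun j _ => ?_
      rw [div_mul_div_comm, ← Real.exp_add,
        show β i * (x - z) + γ j * z = β i * x + (γ j - β i) * z by ring, Real.exp_add]
      ring
    rw [intervalIntegral.integral_congr heq]
    rw [intervalIntegral.integral_finset_sum (fun i _ => by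
      apply Continuous.intervalIntegrable; fun_prop)]
    refine Finset.sum_congr rfl fun i _ => ?_
    rw [intervalIntegral.integral_finset_sum (fun j _ => by
      apply Continuous.intervalIntegrable; fun_prop)]
    refine Finset.sum_congr rfl fun j _ => ?_
    rw [intervalIntegral.integral_const_mul, integral_exp_mul_aux _ _ (hc i j)]
  rw [hint]
  have hfirst : ∀ i, Real.exp (β i * x) / deriv ψ (β i)
      = q * ∑ j, Real.exp (β i * x) / ((β i - γ j) * deriv ψ (β i) * deriv ψ (γ j)) := by
    intro i
    have h2 : ∑ j, Real.exp (β i * x) / ((β i - γ j) * deriv ψ (β i) * deriv ψ (γ j))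
        = Real.exp (β i * x) / deriv ψ (β i) * ∑ j, 1 / ((β i - γ j) * deriv ψ (γ j)) := by
      rw [Finset.mul_sum]
      refine Finset.sum_congr rfl fun j _ => ?_
      rw [div_mul_div_comm, mul_one,
        show (β i - γ j) * deriv ψ (β i) * deriv ψ (γ j)
          = deriv ψ (β i) * ((β i - γ j) * deriv ψ (γ j)) by ring]
    rw [h2, hkey i,
      show q * (Real.exp (β i * x) / deriv ψ (β i) * (1/q))
        = (q * (1/q)) * (Real.exp (β i * x) / deriv ψ (β i)) by ring,
      mul_one_div, div_self hq.ne', one_mul]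
  rw [Finset.sum_congr rfl fun i _ => hfirst i, ← Finset.mul_sum, ← mul_sub,
    ← Finset.sum_sub_distrib]
  congr 1
  refine Finset.sum_congr rfl fun i _ => ?_
  rw [← Finset.sum_sub_distrib]
  refine Finset.sum_congr rfl fun j _ => ?_
  rw [Real.exp_add]
  have h3 : β i - γ j ≠ 0 := sub_ne_zero.2 (hβγ i j)
  field_simp [hβ_simple i, hγ_simple j, h3, hc i j]
  ring
end
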